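/- Let D>0 and z̄<z̃ be real numbers, and set λ = (3(z̃−z̄)/D)^{1/3}. Then: (i) λ is the unique real solution of (z̄−z̃) + (D/3)λ³ = 0; (ii) for every z∈[z̄,z̃] there is a unique v(z) ∈ [0,λ] satisfying (z̄−z) + (D/6)(3λ² v(z) − v(z)³) = 0; (iii) the resulting function v is a continuous, strictly increasing bijection from [z̄,z̃] onto [0,λ] with v(z̄)=0 and v(z̃)=λ, and equivalently v is the inverse of the map x ↦ z̄ + ∫₀^x (D/2)(λ²−s²)ds on [0,λ], i.e. the pseudo-inverse of the cumulative distribution of the Barenblatt profile x ↦ (D/2)(λ²−x²)₊; (iv) for every z∈[z̄,z̃], λ − v(z) ≤ √(3(z̃−z)/(Dλ)), so sup_{z∈[z̄,z̃)} (λ−v(z))/(z̃−z)^{1/2} < ∞. -/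

import Mathlib

/-- Solution of the δ = 0 limiting system: the unique Barenblatt-type profile, its
pseudo-inverse `v`, and the weighted 1/2-Hölder bound `λ − v(z) ≤ √(3(z̃−z)/(Dλ))`. -/
theorem stmt_12 (D zbar ztil : ℝ) (hD : 0 < D) (hz : zbar < ztil)
    (lam : ℝ) (hlam : lam = (3 * (ztil - zbar) / D) ^ ((1 : ℝ) / 3)) :
    (∀ r : ℝ, (zbar - ztil) + (D / 3) * r ^ 3 = 0 ↔ r = lam) ∧
    ∃ v : ℝ → ℝ,
      (∀ z ∈ Set.Icc zbar ztil, v z ∈ Set.Icc 0 lam ∧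
        (zbar - z) + (D / 6) * (3 * lam ^ 2 * v z - (v z) ^ 3) = 0) ∧
      (∀ z ∈ Set.Icc zbar ztil, ∀ w ∈ Set.Icc (0 : ℝ) lam,
        (zbar - z) + (D / 6) * (3 * lam ^ 2 * w - w ^ 3) = 0 → w = v z) ∧
      ContinuousOn v (Set.Icc zbar ztil) ∧
      StrictMonoOn v (Set.Icc zbar ztil) ∧
      v '' Set.Icc zbar ztil = Set.Icc 0 lam ∧
      v zbar = 0 ∧ v ztil = lam ∧
      (∀ x ∈ Set.Icc (0 : ℝ) lam,
        v (zbar + ∫ s in (0 : ℝ)..x, (D / 2) * (lam ^ 2 - s ^ 2)) = x) ∧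
      (∀ z ∈ Set.Icc zbar ztil, lam - v z ≤ Real.sqrt (3 * (ztil - z) / (D * lam))) ∧
      BddAbove ((fun z => (lam - v z) / (ztil - z) ^ ((1 : ℝ) / 2)) '' Set.Ico zbar ztil) := by
  have hD' : D ≠ 0 := ne_of_gt hD
  have hbase : 0 < 3 * (ztil - zbar) / D := by
    apply div_pos (by linarith) hD
  have hlam_pos : 0 < lam := by
    rw [hlam]; exact Real.rpow_pos_of_pos hbase _
  have hlam3 : lam ^ 3 = 3 * (ztil - zbar) / D := by
    rw [hlam, ← Real.rpow_natCast ((3 * (ztil - zbar) / D) ^ ((1 : ℝ) / 3)) 3,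
      ← Real.rpow_mul hbase.le]
    norm_num
  -- the cubic profile
  set g : ℝ → ℝ := fun w => zbar + D / 6 * (3 * lam ^ 2 * w - w ^ 3) with hgdef
  have hg0 : g 0 = zbar := by simp [hgdef]
  have hgl : g lam = ztil := by
    have h3 : lam ^ 3 * D = 3 * (ztil - zbar) := by
      rw [hlam3]; field_simp
    simp only [hgdef]
    nlinarith [h3]
  have hmono : StrictMonoOn g (Set.Icc 0 lam) := by
    intro a ha b hb hab
    simp only [Set.mem_Icc] at ha hb
    have h1 : a < lam := lt_of_lt_of_le hab hb.2
    have hb0 : 0 < b := lt_of_le_of_lt ha.1 hab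
    have haa : a * a < lam * lam := by nlinarith
    have hab2 : a * b ≤ lam * lam := mul_le_mul h1.le hb.2 hb0.le hlam_pos.le
    have hbb : b * b ≤ lam * lam := mul_le_mul hb.2 hb.2 hb0.le hlam_pos.le
    have hfac : 0 < 3 * lam ^ 2 - a ^ 2 - a * b - b ^ 2 := by nlinarith
    have key : 0 < D / 6 * ((b - a) * (3 * lam ^ 2 - a ^ 2 - a * b - b ^ 2)) :=
      mul_pos (by positivity) (mul_pos (sub_pos.mpr hab) hfac)
    simp only [hgdef]
    nlinarith [key]
  have hgc : Continuous g := by fun_prop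
  have himg : g '' Set.Icc 0 lam = Set.Icc zbar ztil := by
    apply Set.Subset.antisymm
    · rintro _ ⟨w, hw, rfl⟩
      simp only [Set.mem_Icc] at hw ⊢
      constructor
      · rw [← hg0]
        rcases eq_or_lt_of_le hw.1 with h | h
        · rw [h]
        · exact (hmono (Set.left_mem_Icc.mpr hlam_pos.le) ⟨hw.1, hw.2⟩ h).le
      · rw [← hgl]
        rcases eq_or_lt_of_le hw.2 with h | h
        · rw [h]
        · exact (hmono ⟨hw.1, hw.2⟩ (Set.right_mem_Icc.mpr hlam_pos.le) h).le
    · rw [← hg0, ← hgl]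
      exact intermediate_value_Icc hlam_pos.le hgc.continuousOn
  -- order isomorphism
  let e : Set.Icc (0 : ℝ) lam ≃o Set.Icc zbar ztil :=
    (hmono.orderIso g _).trans (OrderIso.setCongr _ _ himg)
  have he : ∀ w : Set.Icc (0 : ℝ) lam, (e w : ℝ) = g w := fun w => rfl
  set v : ℝ → ℝ := fun z =>
    if h : z ∈ Set.Icc zbar ztil then (e.symm ⟨z, h⟩ : ℝ) else 0 with hvdef
  have hvmem : ∀ z (hz' : z ∈ Set.Icc zbar ztil), v z ∈ Set.Icc 0 lam := by
    intro z hz'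
    simp only [hvdef, dif_pos hz']
    exact (e.symm ⟨z, hz'⟩).2
  have hgv : ∀ z (hz' : z ∈ Set.Icc zbar ztil), g (v z) = z := by
    intro z hz'
    simp only [hvdef, dif_pos hz']
    have := e.apply_symm_apply ⟨z, hz'⟩
    have := congrArg Subtype.val this
    rwa [he] at this
  have huniq : ∀ z ∈ Set.Icc zbar ztil, ∀ w ∈ Set.Icc (0 : ℝ) lam, g w = z → w = v z := by
    intro z hz' w hw hgw
    exact hmono.injOn hw (hvmem z hz') (by rw [hgw, hgv z hz'])
  have hvz : v zbar = 0 :=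
    (huniq zbar (Set.left_mem_Icc.mpr hz.le) 0 (Set.left_mem_Icc.mpr hlam_pos.le) hg0).symm
  have hvt : v ztil = lam :=
    (huniq ztil (Set.right_mem_Icc.mpr hz.le) lam (Set.right_mem_Icc.mpr hlam_pos.le) hgl).symm
  have hvmono : StrictMonoOn v (Set.Icc zbar ztil) := by
    intro z1 h1 z2 h2 h12
    by_contra hcon
    push_neg at hcon
    have := hmono.monotoneOn (hvmem z2 h2) (hvmem z1 h1) hcon
    rw [hgv z1 h1, hgv z2 h2] at this
    exact absurd this (not_le.mpr h12)
  constructor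
  · -- uniqueness of lam
    intro r
    constructor
    · intro hr
      have h3 : lam ^ 3 * D = 3 * (ztil - zbar) := by rw [hlam3]; field_simp
      have hr3 : r ^ 3 = lam ^ 3 := by
        have h4 : D / 3 * r ^ 3 = ztil - zbar := by linarith
        field_simp at h4 ⊢
        nlinarith [h4, h3]
      exact (Odd.strictMono_pow (R := ℝ) (by decide)).injective hr3
    · intro hr
      rw [hr]
      have h3 : lam ^ 3 * D = 3 * (ztil - zbar) := by rw [hlam3]; field_simp
      nlinarith [h3]
  refine ⟨v, ?_, ?_, ?_, hvmono, ?_, hvz, hvt, ?_, ?_, ?_⟩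
  · intro z hz'
    refine ⟨hvmem z hz', ?_⟩
    have := hgv z hz'
    simp only [hgdef] at this
    linarith [this]
  · intro z hz' w hw heq
    apply huniq z hz' w hw
    simp only [hgdef]
    linarith [heq]
  · -- continuity
    rw [continuousOn_iff_continuous_restrict]
    have : Set.restrict (Set.Icc zbar ztil) v = fun z => (e.symm z : ℝ) := by
      funext z
      exact dif_pos z.2
    rw [show (Set.Icc zbar ztil).domRestrict v = Set.restrict (Set.Icc zbar ztil) v from rfl, this]
    exact continuous_subtype_val.comp e.symm.continuous
  · -- image
    apply Set.Subset.antisymm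
    · rintro _ ⟨z, hz', rfl⟩
      exact hvmem z hz'
    · intro w hw
      have hgw : g w ∈ Set.Icc zbar ztil := himg ▸ Set.mem_image_of_mem g hw
      exact ⟨g w, hgw, (huniq _ hgw w hw rfl).symm⟩
  · -- CDF inverse
    intro x hx
    have hint : (∫ s in (0 : ℝ)..x, (D / 2) * (lam ^ 2 - s ^ 2)) =
        D / 2 * (lam ^ 2 * x - x ^ 3 / 3) := by
      rw [intervalIntegral.integral_const_mul]
      rw [intervalIntegral.integral_sub intervalIntegrable_const
        (intervalIntegral.intervalIntegrable_pow 2),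
        intervalIntegral.integral_const, integral_pow]
      simp only [smul_eq_mul]
      push_cast
      ring
    rw [hint]
    have hmem : zbar + D / 2 * (lam ^ 2 * x - x ^ 3 / 3) ∈ Set.Icc zbar ztil := by
      have : zbar + D / 2 * (lam ^ 2 * x - x ^ 3 / 3) = g x := by
        simp only [hgdef]; ring
      rw [this]
      exact himg ▸ Set.mem_image_of_mem g hx
    refine (huniq _ hmem x hx ?_).symm
    simp only [hgdef]; ring
  · -- sqrt bound
    intro z hz'
    have hvz' := hvmem z hz'
    simp only [Set.mem_Icc] at hvz' hz'
    set w := v z with hw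
    have hgw := hgv z ⟨hz'.1, hz'.2⟩
    simp only [hgdef] at hgw
    -- ztil - z = D/6 (lam - w)^2 (2 lam + w) ≥ D lam/3 (lam-w)^2
    have h3 : lam ^ 3 * D = 3 * (ztil - zbar) := by rw [hlam3]; field_simp
    have key2 : ztil - z = D * lam / 3 * (lam - w) ^ 2 + D / 6 * (w * (lam - w) ^ 2) := by
      linear_combination hgw - h3 / 3
    have key : D * lam / 3 * (lam - w) ^ 2 ≤ ztil - z := by
      have hn : 0 ≤ D / 6 * (w * (lam - w) ^ 2) :=
        mul_nonneg (by positivity) (mul_nonneg hvz'.1 (sq_nonneg _))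
      linarith
    rcases le_or_gt (lam - w) 0 with h | h
    · exact le_trans h (Real.sqrt_nonneg _)
    · rw [show (3 : ℝ) * (ztil - z) / (D * lam) = (ztil - z) / (D * lam / 3) by ring]
      rw [Real.le_sqrt' h]
      rw [le_div_iff₀ (by positivity)]
      linarith [key]
  · -- bounded
    refine ⟨Real.sqrt (3 / (D * lam)), ?_⟩
    rintro _ ⟨z, hz', rfl⟩
    simp only [Set.mem_Ico] at hz'
    have ht : 0 < ztil - z := by linarith [hz'.2]
    have hvz' := hvmem z ⟨hz'.1, hz'.2.le⟩
    simp only [Set.mem_Icc] at hvz'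
    have hbd : lam - v z ≤ Real.sqrt (3 / (D * lam)) * Real.sqrt (ztil - z) := by
      rw [← Real.sqrt_mul (by positivity)]
      have hgw := hgv z ⟨hz'.1, hz'.2.le⟩
      simp only [hgdef] at hgw
      have h3 : lam ^ 3 * D = 3 * (ztil - zbar) := by rw [hlam3]; field_simp
      set w := v z with hwdef
      have key2 : ztil - z = D * lam / 3 * (lam - w) ^ 2 + D / 6 * (w * (lam - w) ^ 2) := by
        linear_combination hgw - h3 / 3
      have key : D * lam / 3 * (lam - w) ^ 2 ≤ ztil - z := by
        have hn : 0 ≤ D / 6 * (w * (lam - w) ^ 2) :=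
        mul_nonneg (by positivity) (mul_nonneg hvz'.1 (sq_nonneg _))
        linarith
      rcases le_or_gt (lam - w) 0 with h | h
      · exact le_trans h (Real.sqrt_nonneg _)
      · rw [show (3 : ℝ) / (D * lam) * (ztil - z) = (ztil - z) / (D * lam / 3) by ring]
        rw [Real.le_sqrt' h, le_div_iff₀ (by positivity)]
        linarith [key]
    show (lam - v z) / (ztil - z) ^ ((1 : ℝ) / 2) ≤ Real.sqrt (3 / (D * lam))
    rw [← Real.sqrt_eq_rpow]
    rw [div_le_iff₀ (Real.sqrt_pos.mpr ht)]
    exact hbd
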